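/- For every real number α ≥ (1+√5)/2, the infinite product ∏_{d=1}^{∞} (1 − α^{-2d})·(1 + α^{-2d})^{-1} converges and is greater than 0.278293. -/

import Mathlib

open Real Finset

private lemma aux_mono {x y : ℝ} (hx : 0 ≤ x) (hxy : x ≤ y) (hy : y < 1) :
    (1 - y) * (1 + y)⁻¹ ≤ (1 - x) * (1 + x)⁻¹ := by
  rw [← div_eq_mul_inv, ← div_eq_mul_inv, div_le_div_iff₀ (by linarith) (by linarith)]
  nlinarith

private lemma aux_pos {x : ℝ} (hx : 0 ≤ x) (hx1 : x < 1) :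
    0 < (1 - x) * (1 + x)⁻¹ :=
  mul_pos (by linarith) (inv_pos.2 (by linarith))

private lemma aux_le_one {x : ℝ} (hx : 0 ≤ x) (hx1 : x < 1) :
    (1 - x) * (1 + x)⁻¹ ≤ 1 := by
  rw [← div_eq_mul_inv, div_le_one (by linarith)]; linarith

private lemma aux_log {x : ℝ} (hx : 0 < x) (hx1 : x < 1) :
    -Real.log ((1 - x) * (1 + x)⁻¹) ≤ x / (1 - x) + x := by
  have h1 : (0:ℝ) < 1 - x := by linarith
  have h2 : (0:ℝ) < 1 + x := by linarith
  have hlog : Real.log ((1 - x) * (1 + x)⁻¹)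
      = Real.log (1 - x) - Real.log (1 + x) := by
    rw [Real.log_mul h1.ne' (by positivity), Real.log_inv]; ring
  have ha : -Real.log (1 - x) ≤ x / (1 - x) := by
    have h := Real.log_le_sub_one_of_pos (inv_pos.2 h1)
    rw [Real.log_inv] at h
    have he : (1 - x)⁻¹ - 1 = x / (1 - x) := by field_simp; ring
    linarith
  have hb : Real.log (1 + x) ≤ x := by
    have h := Real.log_le_sub_one_of_pos h2
    linarith
  rw [hlog]; linarith

private lemma aux_log_nonneg {x : ℝ} (hx : 0 ≤ x) (hx1 : x < 1) :
    0 ≤ -Real.log ((1 - x) * (1 + x)⁻¹) := by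
  have := Real.log_nonpos (aux_pos hx hx1).le (aux_le_one hx hx1)
  linarith

set_option maxHeartbeats 2000000 in
/-- For `α ≥ (1+√5)/2`, the product `∏_{d≥1} (1 − α^{-2d})(1 + α^{-2d})⁻¹`
converges and exceeds `0.278293`. -/
theorem infinite_product_lower_bound
    (α : ℝ) (hα : (1 + Real.sqrt 5) / 2 ≤ α) :
    Multipliable (fun d : ℕ =>
        (1 - (α ^ (2 * (d + 1)))⁻¹) * (1 + (α ^ (2 * (d + 1)))⁻¹)⁻¹) ∧
      (0.278293 : ℝ) <
        ∏' d : ℕ, (1 - (α ^ (2 * (d + 1)))⁻¹) * (1 + (α ^ (2 * (d + 1)))⁻¹)⁻¹ := by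
  -- numerical setup
  set r : ℝ := 0.381966012 with hr_def
  have h5 : (2.236067977 : ℝ) ≤ Real.sqrt 5 := by
    nlinarith [Real.sq_sqrt (show (0:ℝ) ≤ 5 by norm_num), Real.sqrt_nonneg 5,
      sq_nonneg (Real.sqrt 5 - 2.236067977)]
  have hα2 : (1.6180339885 : ℝ) ≤ α := by linarith
  have hα1 : (1 : ℝ) < α := by linarith
  set q : ℝ := (α ^ 2)⁻¹ with hq_def
  have hq0 : 0 < q := by positivity
  have hq : q ≤ r := by
    have hinv : r⁻¹ ≤ α ^ 2 := by
      rw [show r⁻¹ = 250000000 / 95491503 by rw [hr_def]; norm_num]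
      nlinarith [sq_nonneg (α - 1.6180339885)]
    calc q ≤ (r⁻¹)⁻¹ := inv_anti₀ (by rw [hr_def]; norm_num) hinv
      _ = r := inv_inv r
  have hr1 : r < 1 := by rw [hr_def]; norm_num
  have hr0 : 0 < r := by rw [hr_def]; norm_num
  -- the factors in terms of q
  set f : ℕ → ℝ := fun d => (1 - q ^ (d + 1)) * (1 + q ^ (d + 1))⁻¹ with hf_def
  have hfun : (fun d : ℕ =>
      (1 - (α ^ (2 * (d + 1)))⁻¹) * (1 + (α ^ (2 * (d + 1)))⁻¹)⁻¹) = f := by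
    funext d
    simp only [hf_def, hq_def, pow_mul, inv_pow]
  rw [hfun]
  -- basic bounds on x d := q ^ (d+1)
  have hx0 : ∀ d : ℕ, 0 < q ^ (d + 1) := fun d => pow_pos hq0 _
  have hxr : ∀ d : ℕ, q ^ (d + 1) ≤ r ^ (d + 1) := fun d =>
    pow_le_pow_left₀ hq0.le hq _
  have hrpow : ∀ d : ℕ, r ^ (d + 1) ≤ r := fun d => by
    calc r ^ (d + 1) ≤ r ^ 1 :=
          pow_le_pow_of_le_one hr0.le hr1.le (by omega)
      _ = r := pow_one r
  have hx1 : ∀ d : ℕ, q ^ (d + 1) < 1 := fun d =>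
    lt_of_le_of_lt ((hxr d).trans (hrpow d)) hr1
  have hfpos : ∀ d : ℕ, 0 < f d := fun d => aux_pos (hx0 d).le (hx1 d)
  -- logs
  set L : ℕ → ℝ := fun d => Real.log (f d) with hL_def
  have hLnonneg : ∀ d, 0 ≤ -L d := fun d => aux_log_nonneg (hx0 d).le (hx1 d)
  have hLle : ∀ d, -L d ≤ q ^ (d+1) / (1 - q ^ (d+1)) + q ^ (d+1) :=
    fun d => aux_log (hx0 d) (hx1 d)
  have hLgeo : ∀ d, -L d ≤ 2.62 * r ^ (d + 1) := by
    intro d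
    have hy := hxr d
    have hq1 : q ^ (d + 1) ≤ r := (hxr d).trans (hrpow d)
    have hq1' : q ^ (d + 1) ≤ 0.381966012 := by rw [← hr_def]; exact hq1
    have h1 : q ^ (d+1) / (1 - q ^ (d+1)) ≤ 1.62 * q ^ (d+1) := by
      rw [div_le_iff₀ (by linarith [hx1 d])]
      nlinarith [mul_nonneg (hx0 d).le
        (show (0:ℝ) ≤ 0.62 - 1.62 * q ^ (d+1) by linarith)]
    have h2 : (2.62 : ℝ) * q ^ (d + 1) ≤ 2.62 * r ^ (d + 1) := by
      apply mul_le_mul_of_nonneg_left hy (by norm_num)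
    calc -L d ≤ q ^ (d+1) / (1 - q ^ (d+1)) + q ^ (d+1) := hLle d
      _ ≤ 1.62 * q ^ (d+1) + q ^ (d+1) := by linarith
      _ = 2.62 * q ^ (d+1) := by ring
      _ ≤ 2.62 * r ^ (d + 1) := h2
  -- summability of logs
  have hgeo : Summable (fun d : ℕ => (2.62 : ℝ) * r ^ (d + 1)) := by
    have h : Summable (fun d : ℕ => ((2.62 : ℝ) * r) * r ^ d) :=
      (summable_geometric_of_lt_one hr0.le hr1).mul_left _
    exact h.congr fun d => by rw [pow_succ]; ring
  have hnegL : Summable (fun d => -L d) :=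
    Summable.of_nonneg_of_le hLnonneg hLgeo hgeo
  have hLsum : Summable L := by simpa using hnegL.neg
  -- multipliability
  have hexp : (fun d => Real.exp (L d)) = f := funext fun d => Real.exp_log (hfpos d)
  have hprod : HasProd f (Real.exp (∑' d, L d)) := by
    have h := hLsum.hasSum.rexp
    rwa [show rexp ∘ L = fun d => Real.exp (L d) from rfl, hexp] at h
  have hMul : Multipliable f := ⟨_, hprod⟩
  refine ⟨hMul, ?_⟩
  -- tail
  have hLtail : Summable (fun d => L (d + 11)) := (summable_nat_add_iff 11).2 hLsum
  -- tail sum lower bound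
  have hr12 : r ^ 12 ≤ 1 / 101 := by rw [hr_def]; norm_num
  have hb : ∀ d : ℕ, -L (d + 11) ≤ 2.01 * r ^ (d + 12) := by
    intro d
    have hx := hx0 (d + 11)
    have hxr' : q ^ (d + 11 + 1) ≤ r ^ (d + 12) := by
      simpa [show d + 11 + 1 = d + 12 from rfl] using hxr (d + 11)
    have hsmall : q ^ (d + 11 + 1) ≤ 1 / 101 := by
      refine hxr'.trans (le_trans ?_ hr12)
      calc r ^ (d + 12) = r ^ d * r ^ 12 := by rw [← pow_add]
        _ ≤ 1 * r ^ 12 := by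
            apply mul_le_mul_of_nonneg_right _ (by positivity)
            exact pow_le_one₀ hr0.le hr1.le
        _ = r ^ 12 := one_mul _
    have h1 : q ^ (d + 11 + 1) / (1 - q ^ (d + 11 + 1)) ≤ 1.01 * q ^ (d + 11 + 1) := by
      rw [div_le_iff₀ (by linarith [hx1 (d + 11)])]
      nlinarith [mul_nonneg hx.le
        (show (0:ℝ) ≤ 0.01 - 1.01 * q ^ (d + 11 + 1) by linarith)]
    calc -L (d + 11) ≤ q ^ (d+11+1) / (1 - q ^ (d+11+1)) + q ^ (d+11+1) := hLle (d + 11)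
      _ ≤ 1.01 * q ^ (d+11+1) + q ^ (d+11+1) := by linarith
      _ = 2.01 * q ^ (d+11+1) := by ring
      _ ≤ 2.01 * r ^ (d + 12) := mul_le_mul_of_nonneg_left hxr' (by norm_num)
  have hgeo2 : Summable (fun d : ℕ => (2.01 : ℝ) * r ^ (d + 12)) := by
    have h : Summable (fun d : ℕ => ((2.01 : ℝ) * r ^ 12) * r ^ d) :=
      (summable_geometric_of_lt_one hr0.le hr1).mul_left _
    exact h.congr fun d => by rw [pow_add]; ring
  have htsum2 : ∑' d : ℕ, (2.01 : ℝ) * r ^ (d + 12) = 2.01 * r ^ 12 * (1 - r)⁻¹ := by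
    have h : ∀ d : ℕ, (2.01 : ℝ) * r ^ (d + 12) = (2.01 * r ^ 12) * r ^ d := by
      intro d; rw [pow_add]; ring
    rw [tsum_congr h, tsum_mul_left, tsum_geometric_of_lt_one hr0.le hr1]
  have htail_sum : -(2.01 * r ^ 12 * (1 - r)⁻¹) ≤ ∑' d, L (d + 11) := by
    have h := Summable.tsum_le_tsum hb hLtail.neg hgeo2
    rw [tsum_neg, htsum2] at h
    linarith
  have htail_ge : 1 - 2.01 * r ^ 12 * (1 - r)⁻¹ ≤ Real.exp (∑' d, L (d + 11)) := by
    calc 1 - 2.01 * r ^ 12 * (1 - r)⁻¹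
        = -(2.01 * r ^ 12 * (1 - r)⁻¹) + 1 := by ring
      _ ≤ Real.exp (-(2.01 * r ^ 12 * (1 - r)⁻¹)) := Real.add_one_le_exp _
      _ ≤ Real.exp (∑' d, L (d + 11)) := Real.exp_le_exp.2 htail_sum
  -- head
  have hhead : ∏ i ∈ range 11, (1 - r ^ (i + 1)) * (1 + r ^ (i + 1))⁻¹
      ≤ ∏ i ∈ range 11, f i := by
    apply Finset.prod_le_prod
    · intro i _
      exact (aux_pos (pow_nonneg hr0.le _) (lt_of_le_of_lt (hrpow i) hr1)).le
    · intro i _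
      exact aux_mono (hx0 i).le (hxr i) (lt_of_le_of_lt (hrpow i) hr1)
  have hheadpos : 0 ≤ ∏ i ∈ range 11, f i :=
    Finset.prod_nonneg fun i _ => (hfpos i).le
  -- combine
  have hsplit : ∏' i, f i = (∏ i ∈ range 11, f i) * Real.exp (∑' d, L (d + 11)) := by
    rw [hprod.tprod_eq, ← Summable.sum_add_tsum_nat_add 11 hLsum, Real.exp_add, Real.exp_sum]
    congr 1
    exact Finset.prod_congr rfl fun i _ => Real.exp_log (hfpos i)
  rw [hsplit]
  have hnum : (0.278293 : ℝ) <
      (∏ i ∈ range 11, (1 - r ^ (i + 1)) * (1 + r ^ (i + 1))⁻¹)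
        * (1 - 2.01 * r ^ 12 * (1 - r)⁻¹) := by
    rw [hr_def]
    simp only [Finset.prod_range_succ, Finset.prod_range_zero, one_mul]
    norm_num
  calc (0.278293 : ℝ)
      < (∏ i ∈ range 11, (1 - r ^ (i + 1)) * (1 + r ^ (i + 1))⁻¹)
          * (1 - 2.01 * r ^ 12 * (1 - r)⁻¹) := hnum
    _ ≤ (∏ i ∈ range 11, f i) * Real.exp (∑' d, L (d + 11)) := by
        apply mul_le_mul hhead htail_ge ?_ hheadpos
        rw [hr_def]; norm_num
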